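/- Let K_4 be the complete graph on the vertex set {1,2,3,4} and K a field. Then the cut ideal I_{K_4} is the principal ideal generated by the degree-4 binomial q_{1|234} q_{2|134} q_{3|124} q_{4|123} − q_{∅|1234} q_{12|34} q_{13|24} q_{14|23}. -/

import Mathlib

open scoped Classical

noncomputable section

namespace CutPaper

open MvPolynomial

/-- An edge `e` is cut by the partition `A | Aᶜ` if it has exactly one endpoint in `A`. -/
def IsCutEdge {V : Type} (A : Set V) (e : Sym2 V) : Prop :=
  ∃ u v : V, e = s(u, v) ∧ u ∈ A ∧ v ∉ A

/-- The cut set of `A`: all edges of `G` with exactly one endpoint in `A`. -/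
def cutSet {V : Type} (G : SimpleGraph V) (A : Set V) : Set (Sym2 V) :=
  {e ∈ G.edgeSet | IsCutEdge A e}

lemma isCutEdge_compl {V : Type} (A : Set V) (e : Sym2 V) :
    IsCutEdge Aᶜ e ↔ IsCutEdge A e := by
  constructor <;> rintro ⟨u, v, rfl, hu, hv⟩
  · exact ⟨v, u, Sym2.eq_swap, by simpa using hv, hu⟩
  · exact ⟨v, u, Sym2.eq_swap, hv, not_not_intro hu⟩

/-- Two subsets determine the same unordered partition `A | Aᶜ` of `V`
iff they are equal or complementary. -/
def partitionSetoid (V : Type) : Setoid (Set V) where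
  r A B := B = A ∨ B = Aᶜ
  iseqv := by
    refine ⟨fun A => Or.inl rfl, @fun A B h => ?_, @fun A B C h1 h2 => ?_⟩
    · rcases h with rfl | rfl
      · exact Or.inl rfl
      · exact Or.inr (compl_compl A).symm
    · rcases h1 with rfl | rfl <;> rcases h2 with rfl | rfl
      · exact Or.inl rfl
      · exact Or.inr rfl
      · exact Or.inr rfl
      · exact Or.inl (compl_compl A)

/-- The unordered partitions `A | Aᶜ` of `V`, indexing the variables of `S_G`. -/
abbrev Partition (V : Type) := Quotient (partitionSetoid V)

variable (K : Type) [CommRing K]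

/-- The variable `q_{A|Aᶜ}` of the polynomial ring `S_G`. -/
def qPart {V : Type} (A : Set V) : MvPolynomial (Partition V) K :=
  X (Quotient.mk (partitionSetoid V) A)

/-- The monomial `u_A = ∏_{e ∈ Cut(A)} s_e · ∏_{e ∈ E \ Cut(A)} t_e`;
the variable `s_e` is `X (true, e)` and `t_e` is `X (false, e)`. -/
def cutMonomial {V : Type} [Finite V] (G : SimpleGraph V) (A : Set V) :
    MvPolynomial (Bool × Sym2 V) K :=
  ∏ e ∈ (Set.toFinite G.edgeSet).toFinset,
    if IsCutEdge A e then X (true, e) else X (false, e)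

lemma cutMonomial_compl {V : Type} [Finite V] (G : SimpleGraph V) (A : Set V) :
    cutMonomial K G Aᶜ = cutMonomial K G A := by
  unfold cutMonomial
  refine Finset.prod_congr rfl fun e _ => ?_
  by_cases h : IsCutEdge A e
  · rw [if_pos ((isCutEdge_compl A e).mpr h), if_pos h]
  · rw [if_neg fun hc => h ((isCutEdge_compl A e).mp hc), if_neg h]

/-- The `K`-algebra homomorphism `φ_G : S_G → R_G`, `q_{A|Aᶜ} ↦ u_A`. -/
def phi {V : Type} [Finite V] (G : SimpleGraph V) :
    MvPolynomial (Partition V) K →ₐ[K] MvPolynomial (Bool × Sym2 V) K :=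
  aeval fun p : Partition V =>
    Quotient.lift (cutMonomial K G)
      (fun A B hAB => by
        have h : B = A ∨ B = Aᶜ := hAB
        rcases h with rfl | rfl
        · rfl
        · exact (cutMonomial_compl K G A).symm) p

/-- The cut ideal `I_G = ker φ_G`. -/
def cutIdeal {V : Type} [Finite V] (G : SimpleGraph V) :
    Ideal (MvPolynomial (Partition V) K) :=
  RingHom.ker (phi K G)

/-- The cut algebra `K[G]`, i.e. the image of `φ_G`: the `K`-subalgebra of `R_G`
generated by the monomials `u_A`. -/
def cutAlgebra {V : Type} [Finite V] (G : SimpleGraph V) :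
    Subalgebra K (MvPolynomial (Bool × Sym2 V) K) :=
  Algebra.adjoin K {m | ∃ A : Set V, m = cutMonomial K G A}

/-- The generator `u_A` of the cut algebra, as an element of the cut algebra. -/
def uGen {V : Type} [Finite V] (G : SimpleGraph V) (A : Set V) : ↥(cutAlgebra K G) :=
  ⟨cutMonomial K G A, Algebra.subset_adjoin ⟨A, rfl⟩⟩

/-- An element of `S_G/I` is homogeneous of degree `d` if it is the class of a homogeneous
polynomial of degree `d`. -/
def QuotHomogeneous {σ : Type} (I : Ideal (MvPolynomial σ K)) (d : ℕ)
    (x : MvPolynomial σ K ⧸ I) : Prop :=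
  ∃ f : MvPolynomial σ K, f.IsHomogeneous d ∧ Ideal.Quotient.mk I f = x

/-- The cut algebra of `H` is an algebra retract of the cut algebra of `G`:
there are homogeneous `K`-algebra homomorphisms `ι : K[H] → K[G]` (injective) and
`π : K[G] → K[H]` with `π ∘ ι = id`. -/
def CutAlgebraRetract {V W : Type} [Finite V] [Finite W]
    (H : SimpleGraph W) (G : SimpleGraph V) : Prop :=
  ∃ (ι : (MvPolynomial (Partition W) K ⧸ cutIdeal K H) →ₐ[K]
      (MvPolynomial (Partition V) K ⧸ cutIdeal K G))
    (π : (MvPolynomial (Partition V) K ⧸ cutIdeal K G) →ₐ[K]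
      (MvPolynomial (Partition W) K ⧸ cutIdeal K H)),
    Function.Injective ι ∧
    (∀ d x, QuotHomogeneous K (cutIdeal K H) d x →
      ∃ d', QuotHomogeneous K (cutIdeal K G) d' (ι x)) ∧
    (∀ d x, QuotHomogeneous K (cutIdeal K G) d x →
      ∃ d', QuotHomogeneous K (cutIdeal K H) d' (π x)) ∧
    π.comp ι = AlgHom.id K _

/-- The graph obtained from `G` by contracting the edge `{u, v}`: the vertex `u` is removed
and merged into `v`. -/
def contractEdge {V : Type} (G : SimpleGraph V) (u v : V) :
    SimpleGraph {x : V // x ≠ u} where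
  Adj a b := a ≠ b ∧
    (G.Adj a b ∨ ((a : V) = v ∧ G.Adj u b) ∨ ((b : V) = v ∧ G.Adj a u))
  symm := by
    constructor
    rintro a b ⟨hne, h | ⟨ha, h⟩ | ⟨hb, h⟩⟩
    · exact ⟨hne.symm, Or.inl h.symm⟩
    · exact ⟨hne.symm, Or.inr (Or.inr ⟨ha, h.symm⟩)⟩
    · exact ⟨hne.symm, Or.inr (Or.inl ⟨hb, h.symm⟩)⟩
  loopless := ⟨fun a h => h.1 rfl⟩

/-- The induced subgraph `G_W` is a neighborhood-minor of `G`: `W` and `W' = Wᶜ` are nonempty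
and there is a vertex `v ∈ W` with `W ∩ N_G(W') ⊆ N_{G_W}[v]`. -/
def IsNeighborhoodMinor {V : Type} (G : SimpleGraph V) (W : Set V) : Prop :=
  W.Nonempty ∧ Wᶜ.Nonempty ∧
    ∃ v ∈ W, ∀ x ∈ W, (∃ y ∈ Wᶜ, G.Adj y x) → x = v ∨ G.Adj v x

/-- The cut vector `δ_A ∈ {0,1}^E` of the partition `A | Aᶜ`. -/
def cutVector {V : Type} (G : SimpleGraph V) (A : Set V) : ↥G.edgeSet → ℝ :=
  fun e => if IsCutEdge A (e : Sym2 V) then 1 else 0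

/-- The cut polytope `Cut^□(G) ⊆ ℝ^E`: the convex hull of the cut vectors. -/
def cutPolytope {V : Type} (G : SimpleGraph V) : Set (↥G.edgeSet → ℝ) :=
  convexHull ℝ {x | ∃ A : Set V, x = cutVector G A}

/-- `F` is a face of `P`: either a trivial face (`P` or `∅`), or the intersection of `P`
with a supporting hyperplane. -/
def IsFace {α : Type} (P F : Set (α → ℝ)) : Prop :=
  F = P ∨ F = ∅ ∨
    ∃ (φ : (α → ℝ) →ₗ[ℝ] ℝ) (c : ℝ), φ ≠ 0 ∧
      (∀ x ∈ P, φ x ≤ c) ∧ F = P ∩ {x | φ x = c}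

/-- `P` and `Q` are affinely isomorphic: there is a bijective map from `P` onto `Q`
extending to an affine map. -/
def AffinelyIsomorphic {α β : Type} (P : Set (α → ℝ)) (Q : Set (β → ℝ)) : Prop :=
  ∃ f : (α → ℝ) →ᵃ[ℝ] (β → ℝ), Set.InjOn f P ∧ f '' P = Q

/-- The monomial `z · ∏_{e ∈ Cut(A)} y_e` of the polytopal algebra of the cut polytope;
the variable `z` is `X none` and `y_e` is `X (some e)`. -/
def polytopeMonomial {V : Type} [Finite V] (G : SimpleGraph V) (A : Set V) :
    MvPolynomial (Option (Sym2 V)) K :=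
  X none * ∏ e ∈ (Set.toFinite (cutSet G A)).toFinset, X (some e)

/-- The polytopal algebra `K[Cut^□(G)]`: the subalgebra of `K[y_e (e ∈ E), z]` generated by
the monomials `z · y^{δ_A}` attached to the lattice points (= cut vectors) of `Cut^□(G)`. -/
def polytopalAlgebra {V : Type} [Finite V] (G : SimpleGraph V) :
    Subalgebra K (MvPolynomial (Option (Sym2 V)) K) :=
  Algebra.adjoin K {m | ∃ A : Set V, m = polytopeMonomial K G A}

/-- `G'` is a combinatorial retract of `G`: it is obtained from `G` by a finite sequence of
edge contractions and neighborhood-minors. -/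
inductive CombinatorialRetract : ∀ {V W : Type}, SimpleGraph V → SimpleGraph W → Prop
  | refl {V : Type} (G : SimpleGraph V) : CombinatorialRetract G G
  | contract {V W : Type} (G : SimpleGraph V) (u v : V) (huv : G.Adj u v)
      (G' : SimpleGraph W) (h : CombinatorialRetract (contractEdge G u v) G') :
      CombinatorialRetract G G'
  | nbhdMinor {V W : Type} (G : SimpleGraph V) (S : Set V)
      (hS : IsNeighborhoodMinor G S) (G' : SimpleGraph W)
      (h : CombinatorialRetract (SimpleGraph.induce S G) G') :
      CombinatorialRetract G G'

section K4

abbrev σ4 := Partition (Fin 4)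

def pp (A : Set (Fin 4)) : σ4 := Quotient.mk (partitionSetoid (Fin 4)) A

lemma pp_ne (A B : Set (Fin 4)) (h1 : B ≠ A) (h2 : B ≠ Aᶜ) : pp A ≠ pp B :=
  fun h => (Quotient.exact h).elim h1 h2

abbrev P0 : σ4 := pp (∅ : Set (Fin 4))
abbrev P1 : σ4 := pp ({0} : Set (Fin 4))
abbrev P2 : σ4 := pp ({1} : Set (Fin 4))
abbrev P3 : σ4 := pp ({2} : Set (Fin 4))
abbrev P4 : σ4 := pp ({3} : Set (Fin 4))
abbrev P5 : σ4 := pp ({0, 1} : Set (Fin 4))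
abbrev P6 : σ4 := pp ({0, 2} : Set (Fin 4))
abbrev P7 : σ4 := pp ({0, 3} : Set (Fin 4))

lemma neP01 : P0 ≠ P1 :=
  pp_ne _ _ (fun h => by have := Set.ext_iff.mp h 0; simp at this)
    (fun h => by have := Set.ext_iff.mp h 1; simp at this)
lemma neP02 : P0 ≠ P2 :=
  pp_ne _ _ (fun h => by have := Set.ext_iff.mp h 1; simp at this)
    (fun h => by have := Set.ext_iff.mp h 0; simp at this)
lemma neP03 : P0 ≠ P3 :=
  pp_ne _ _ (fun h => by have := Set.ext_iff.mp h 2; simp at this)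
    (fun h => by have := Set.ext_iff.mp h 0; simp at this)
lemma neP04 : P0 ≠ P4 :=
  pp_ne _ _ (fun h => by have := Set.ext_iff.mp h 3; simp at this)
    (fun h => by have := Set.ext_iff.mp h 0; simp at this)
lemma neP05 : P0 ≠ P5 :=
  pp_ne _ _ (fun h => by have := Set.ext_iff.mp h 0; simp at this)
    (fun h => by have := Set.ext_iff.mp h 2; simp at this)
lemma neP06 : P0 ≠ P6 :=
  pp_ne _ _ (fun h => by have := Set.ext_iff.mp h 0; simp at this)
    (fun h => by have := Set.ext_iff.mp h 1; simp at this)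
lemma neP07 : P0 ≠ P7 :=
  pp_ne _ _ (fun h => by have := Set.ext_iff.mp h 0; simp at this)
    (fun h => by have := Set.ext_iff.mp h 1; simp at this)
lemma neP10 : P1 ≠ P0 :=
  pp_ne _ _ (fun h => by have := Set.ext_iff.mp h 0; simp at this)
    (fun h => by have := Set.ext_iff.mp h 1; simp at this)
lemma neP12 : P1 ≠ P2 :=
  pp_ne _ _ (fun h => by have := Set.ext_iff.mp h 0; simp at this)
    (fun h => by have := Set.ext_iff.mp h 2; simp at this)
lemma neP13 : P1 ≠ P3 :=
  pp_ne _ _ (fun h => by have := Set.ext_iff.mp h 0; simp at this)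
    (fun h => by have := Set.ext_iff.mp h 1; simp at this)
lemma neP14 : P1 ≠ P4 :=
  pp_ne _ _ (fun h => by have := Set.ext_iff.mp h 0; simp at this)
    (fun h => by have := Set.ext_iff.mp h 1; simp at this)
lemma neP15 : P1 ≠ P5 :=
  pp_ne _ _ (fun h => by have := Set.ext_iff.mp h 1; simp at this)
    (fun h => by have := Set.ext_iff.mp h 0; simp at this)
lemma neP16 : P1 ≠ P6 :=
  pp_ne _ _ (fun h => by have := Set.ext_iff.mp h 2; simp at this)
    (fun h => by have := Set.ext_iff.mp h 0; simp at this)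
lemma neP17 : P1 ≠ P7 :=
  pp_ne _ _ (fun h => by have := Set.ext_iff.mp h 3; simp at this)
    (fun h => by have := Set.ext_iff.mp h 0; simp at this)
lemma neP20 : P2 ≠ P0 :=
  pp_ne _ _ (fun h => by have := Set.ext_iff.mp h 1; simp at this)
    (fun h => by have := Set.ext_iff.mp h 0; simp at this)
lemma neP21 : P2 ≠ P1 :=
  pp_ne _ _ (fun h => by have := Set.ext_iff.mp h 0; simp at this)
    (fun h => by have := Set.ext_iff.mp h 2; simp at this)
lemma neP23 : P2 ≠ P3 :=
  pp_ne _ _ (fun h => by have := Set.ext_iff.mp h 1; simp at this)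
    (fun h => by have := Set.ext_iff.mp h 0; simp at this)
lemma neP24 : P2 ≠ P4 :=
  pp_ne _ _ (fun h => by have := Set.ext_iff.mp h 1; simp at this)
    (fun h => by have := Set.ext_iff.mp h 0; simp at this)
lemma neP25 : P2 ≠ P5 :=
  pp_ne _ _ (fun h => by have := Set.ext_iff.mp h 0; simp at this)
    (fun h => by have := Set.ext_iff.mp h 1; simp at this)
lemma neP26 : P2 ≠ P6 :=
  pp_ne _ _ (fun h => by have := Set.ext_iff.mp h 0; simp at this)
    (fun h => by have := Set.ext_iff.mp h 3; simp at this)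
lemma neP27 : P2 ≠ P7 :=
  pp_ne _ _ (fun h => by have := Set.ext_iff.mp h 0; simp at this)
    (fun h => by have := Set.ext_iff.mp h 2; simp at this)
lemma neP30 : P3 ≠ P0 :=
  pp_ne _ _ (fun h => by have := Set.ext_iff.mp h 2; simp at this)
    (fun h => by have := Set.ext_iff.mp h 0; simp at this)
lemma neP31 : P3 ≠ P1 :=
  pp_ne _ _ (fun h => by have := Set.ext_iff.mp h 0; simp at this)
    (fun h => by have := Set.ext_iff.mp h 1; simp at this)
lemma neP32 : P3 ≠ P2 :=
  pp_ne _ _ (fun h => by have := Set.ext_iff.mp h 1; simp at this)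
    (fun h => by have := Set.ext_iff.mp h 0; simp at this)
lemma neP34 : P3 ≠ P4 :=
  pp_ne _ _ (fun h => by have := Set.ext_iff.mp h 2; simp at this)
    (fun h => by have := Set.ext_iff.mp h 0; simp at this)
lemma neP35 : P3 ≠ P5 :=
  pp_ne _ _ (fun h => by have := Set.ext_iff.mp h 0; simp at this)
    (fun h => by have := Set.ext_iff.mp h 3; simp at this)
lemma neP36 : P3 ≠ P6 :=
  pp_ne _ _ (fun h => by have := Set.ext_iff.mp h 0; simp at this)
    (fun h => by have := Set.ext_iff.mp h 1; simp at this)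
lemma neP37 : P3 ≠ P7 :=
  pp_ne _ _ (fun h => by have := Set.ext_iff.mp h 0; simp at this)
    (fun h => by have := Set.ext_iff.mp h 1; simp at this)
lemma neP40 : P4 ≠ P0 :=
  pp_ne _ _ (fun h => by have := Set.ext_iff.mp h 3; simp at this)
    (fun h => by have := Set.ext_iff.mp h 0; simp at this)
lemma neP41 : P4 ≠ P1 :=
  pp_ne _ _ (fun h => by have := Set.ext_iff.mp h 0; simp at this)
    (fun h => by have := Set.ext_iff.mp h 1; simp at this)
lemma neP42 : P4 ≠ P2 :=
  pp_ne _ _ (fun h => by have := Set.ext_iff.mp h 1; simp at this)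
    (fun h => by have := Set.ext_iff.mp h 0; simp at this)
lemma neP43 : P4 ≠ P3 :=
  pp_ne _ _ (fun h => by have := Set.ext_iff.mp h 2; simp at this)
    (fun h => by have := Set.ext_iff.mp h 0; simp at this)
lemma neP45 : P4 ≠ P5 :=
  pp_ne _ _ (fun h => by have := Set.ext_iff.mp h 0; simp at this)
    (fun h => by have := Set.ext_iff.mp h 2; simp at this)
lemma neP46 : P4 ≠ P6 :=
  pp_ne _ _ (fun h => by have := Set.ext_iff.mp h 0; simp at this)
    (fun h => by have := Set.ext_iff.mp h 1; simp at this)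
lemma neP47 : P4 ≠ P7 :=
  pp_ne _ _ (fun h => by have := Set.ext_iff.mp h 0; simp at this)
    (fun h => by have := Set.ext_iff.mp h 1; simp at this)
lemma neP50 : P5 ≠ P0 :=
  pp_ne _ _ (fun h => by have := Set.ext_iff.mp h 0; simp at this)
    (fun h => by have := Set.ext_iff.mp h 2; simp at this)
lemma neP51 : P5 ≠ P1 :=
  pp_ne _ _ (fun h => by have := Set.ext_iff.mp h 1; simp at this)
    (fun h => by have := Set.ext_iff.mp h 0; simp at this)
lemma neP52 : P5 ≠ P2 :=
  pp_ne _ _ (fun h => by have := Set.ext_iff.mp h 0; simp at this)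
    (fun h => by have := Set.ext_iff.mp h 1; simp at this)
lemma neP53 : P5 ≠ P3 :=
  pp_ne _ _ (fun h => by have := Set.ext_iff.mp h 0; simp at this)
    (fun h => by have := Set.ext_iff.mp h 3; simp at this)
lemma neP54 : P5 ≠ P4 :=
  pp_ne _ _ (fun h => by have := Set.ext_iff.mp h 0; simp at this)
    (fun h => by have := Set.ext_iff.mp h 2; simp at this)
lemma neP56 : P5 ≠ P6 :=
  pp_ne _ _ (fun h => by have := Set.ext_iff.mp h 1; simp at this)
    (fun h => by have := Set.ext_iff.mp h 0; simp at this)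
lemma neP57 : P5 ≠ P7 :=
  pp_ne _ _ (fun h => by have := Set.ext_iff.mp h 1; simp at this)
    (fun h => by have := Set.ext_iff.mp h 0; simp at this)
lemma neP60 : P6 ≠ P0 :=
  pp_ne _ _ (fun h => by have := Set.ext_iff.mp h 0; simp at this)
    (fun h => by have := Set.ext_iff.mp h 1; simp at this)
lemma neP61 : P6 ≠ P1 :=
  pp_ne _ _ (fun h => by have := Set.ext_iff.mp h 2; simp at this)
    (fun h => by have := Set.ext_iff.mp h 0; simp at this)
lemma neP62 : P6 ≠ P2 :=
  pp_ne _ _ (fun h => by have := Set.ext_iff.mp h 0; simp at this)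
    (fun h => by have := Set.ext_iff.mp h 3; simp at this)
lemma neP63 : P6 ≠ P3 :=
  pp_ne _ _ (fun h => by have := Set.ext_iff.mp h 0; simp at this)
    (fun h => by have := Set.ext_iff.mp h 1; simp at this)
lemma neP64 : P6 ≠ P4 :=
  pp_ne _ _ (fun h => by have := Set.ext_iff.mp h 0; simp at this)
    (fun h => by have := Set.ext_iff.mp h 1; simp at this)
lemma neP65 : P6 ≠ P5 :=
  pp_ne _ _ (fun h => by have := Set.ext_iff.mp h 1; simp at this)
    (fun h => by have := Set.ext_iff.mp h 0; simp at this)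
lemma neP67 : P6 ≠ P7 :=
  pp_ne _ _ (fun h => by have := Set.ext_iff.mp h 2; simp at this)
    (fun h => by have := Set.ext_iff.mp h 0; simp at this)
lemma neP70 : P7 ≠ P0 :=
  pp_ne _ _ (fun h => by have := Set.ext_iff.mp h 0; simp at this)
    (fun h => by have := Set.ext_iff.mp h 1; simp at this)
lemma neP71 : P7 ≠ P1 :=
  pp_ne _ _ (fun h => by have := Set.ext_iff.mp h 3; simp at this)
    (fun h => by have := Set.ext_iff.mp h 0; simp at this)
lemma neP72 : P7 ≠ P2 :=
  pp_ne _ _ (fun h => by have := Set.ext_iff.mp h 0; simp at this)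
    (fun h => by have := Set.ext_iff.mp h 2; simp at this)
lemma neP73 : P7 ≠ P3 :=
  pp_ne _ _ (fun h => by have := Set.ext_iff.mp h 0; simp at this)
    (fun h => by have := Set.ext_iff.mp h 1; simp at this)
lemma neP74 : P7 ≠ P4 :=
  pp_ne _ _ (fun h => by have := Set.ext_iff.mp h 0; simp at this)
    (fun h => by have := Set.ext_iff.mp h 1; simp at this)
lemma neP75 : P7 ≠ P5 :=
  pp_ne _ _ (fun h => by have := Set.ext_iff.mp h 1; simp at this)
    (fun h => by have := Set.ext_iff.mp h 0; simp at this)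
lemma neP76 : P7 ≠ P6 :=
  pp_ne _ _ (fun h => by have := Set.ext_iff.mp h 2; simp at this)
    (fun h => by have := Set.ext_iff.mp h 0; simp at this)

lemma partition_cases (p : σ4) :
    p = P0 ∨ p = P1 ∨ p = P2 ∨ p = P3 ∨ p = P4 ∨ p = P5 ∨ p = P6 ∨ p = P7 := by
  induction p using Quotient.inductionOn with
  | h A =>
  by_cases h0 : (0 : Fin 4) ∈ A <;> by_cases h1 : (1 : Fin 4) ∈ A <;>
    by_cases h2 : (2 : Fin 4) ∈ A <;> by_cases h3 : (3 : Fin 4) ∈ A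
  -- TTTT : compl of ∅
  · exact Or.inl (Quotient.sound (Or.inr (by ext x; fin_cases x <;> simp [h0, h1, h2, h3])))
  -- TTTF : compl of {3}
  · exact Or.inr (Or.inr (Or.inr (Or.inr (Or.inl
      (Quotient.sound (Or.inr (by ext x; fin_cases x <;> simp [h0, h1, h2, h3])))))))
  -- TTFT : compl of {2}
  · exact Or.inr (Or.inr (Or.inr (Or.inl
      (Quotient.sound (Or.inr (by ext x; fin_cases x <;> simp [h0, h1, h2, h3]))))))
  -- TTFF : {0,1}
  · exact Or.inr (Or.inr (Or.inr (Or.inr (Or.inr (Or.inl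
      (Quotient.sound (Or.inl (by ext x; fin_cases x <;> simp [h0, h1, h2, h3]))))))))
  -- TFTT : compl of {1}
  · exact Or.inr (Or.inr (Or.inl
      (Quotient.sound (Or.inr (by ext x; fin_cases x <;> simp [h0, h1, h2, h3])))))
  -- TFTF : {0,2}
  · exact Or.inr (Or.inr (Or.inr (Or.inr (Or.inr (Or.inr (Or.inl
      (Quotient.sound (Or.inl (by ext x; fin_cases x <;> simp [h0, h1, h2, h3])))))))))
  -- TFFT : {0,3}
  · exact Or.inr (Or.inr (Or.inr (Or.inr (Or.inr (Or.inr (Or.inr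
      (Quotient.sound (Or.inl (by ext x; fin_cases x <;> simp [h0, h1, h2, h3])))))))))
  -- TFFF : {0}
  · exact Or.inr (Or.inl
      (Quotient.sound (Or.inl (by ext x; fin_cases x <;> simp [h0, h1, h2, h3]))))
  -- FTTT : compl of {0}
  · exact Or.inr (Or.inl
      (Quotient.sound (Or.inr (by ext x; fin_cases x <;> simp [h0, h1, h2, h3]))))
  -- FTTF : compl of {0,3}
  · exact Or.inr (Or.inr (Or.inr (Or.inr (Or.inr (Or.inr (Or.inr
      (Quotient.sound (Or.inr (by ext x; fin_cases x <;> simp [h0, h1, h2, h3])))))))))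
  -- FTFT : compl of {0,2}
  · exact Or.inr (Or.inr (Or.inr (Or.inr (Or.inr (Or.inr (Or.inl
      (Quotient.sound (Or.inr (by ext x; fin_cases x <;> simp [h0, h1, h2, h3])))))))))
  -- FTFF : {1}
  · exact Or.inr (Or.inr (Or.inl
      (Quotient.sound (Or.inl (by ext x; fin_cases x <;> simp [h0, h1, h2, h3])))))
  -- FFTT : compl of {0,1}
  · exact Or.inr (Or.inr (Or.inr (Or.inr (Or.inr (Or.inl
      (Quotient.sound (Or.inr (by ext x; fin_cases x <;> simp [h0, h1, h2, h3]))))))))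
  -- FFTF : {2}
  · exact Or.inr (Or.inr (Or.inr (Or.inl
      (Quotient.sound (Or.inl (by ext x; fin_cases x <;> simp [h0, h1, h2, h3]))))))
  -- FFFT : {3}
  · exact Or.inr (Or.inr (Or.inr (Or.inr (Or.inl
      (Quotient.sound (Or.inl (by ext x; fin_cases x <;> simp [h0, h1, h2, h3])))))))
  -- FFFF : ∅
  · exact Or.inl (Quotient.sound (Or.inl (by ext x; fin_cases x <;> simp [h0, h1, h2, h3])))

end K4
section K4b

abbrev τ4 := Bool × Sym2 (Fin 4)

/-- The edge finset of `K₄`. -/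
def EF : Finset (Sym2 (Fin 4)) :=
  (Set.toFinite (⊤ : SimpleGraph (Fin 4)).edgeSet).toFinset

lemma mem_EF (e : Sym2 (Fin 4)) : e ∈ EF ↔ ¬ e.IsDiag := by
  unfold EF
  rw [Set.Finite.mem_toFinset]
  induction e using Sym2.ind with
  | _ u v => simp [SimpleGraph.mem_edgeSet, Sym2.mk_isDiag_iff]

/-- The exponent vector of the monomial `u_A`. -/
def wA (A : Set (Fin 4)) : τ4 →₀ ℕ :=
  ∑ e ∈ EF, Finsupp.single (if IsCutEdge A e then (true, e) else (false, e)) 1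

lemma wA_compl (A : Set (Fin 4)) : wA Aᶜ = wA A := by
  unfold wA
  refine Finset.sum_congr rfl fun e _ => ?_
  by_cases h : IsCutEdge A e
  · rw [if_pos ((isCutEdge_compl A e).mpr h), if_pos h]
  · rw [if_neg (fun hc => h ((isCutEdge_compl A e).mp hc)), if_neg h]

/-- The exponent vector indexed by a partition. -/
def wQ (p : σ4) : τ4 →₀ ℕ :=
  Quotient.lift wA
    (fun A B hAB => by
      rcases (hAB : B = A ∨ B = Aᶜ) with rfl | rfl
      · rfl
      · exact (wA_compl A).symm) p

lemma wQ_pp (A : Set (Fin 4)) : wQ (pp A) = wA A := rfl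

variable (K : Type) [CommRing K]

open MvPolynomial

lemma prod_monomial_one {ι σ : Type} (s : Finset ι) (f : ι → (σ →₀ ℕ)) :
    (∏ i ∈ s, (monomial (f i) (1 : K))) = monomial (∑ i ∈ s, f i) 1 := by
  classical
  induction s using Finset.induction_on with
  | empty => simp
  | insert _ _ h ih => rw [Finset.prod_insert h, ih, monomial_mul, one_mul, Finset.sum_insert h]

lemma cutMonomial_eq (A : Set (Fin 4)) :
    cutMonomial K (⊤ : SimpleGraph (Fin 4)) A = monomial (wA A) 1 := by
  unfold cutMonomial wA
  rw [← prod_monomial_one]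
  refine Finset.prod_congr rfl fun e _ => ?_
  by_cases h : IsCutEdge A e <;> simp [h, X]

/-- The exponent vector of `φ(Xᵃ)`. -/
def Wm (a : σ4 →₀ ℕ) : τ4 →₀ ℕ := a.sum fun p n => n • wQ p

lemma phi_monomial (a : σ4 →₀ ℕ) (c : K) :
    phi K (⊤ : SimpleGraph (Fin 4)) (monomial a c) = monomial (Wm a) c := by
  unfold phi
  rw [aeval_monomial]
  have hX : ∀ p : σ4,
      (Quotient.lift (cutMonomial K (⊤ : SimpleGraph (Fin 4)))
        (fun A B hAB => by
          have h : B = A ∨ B = Aᶜ := hAB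
          rcases h with rfl | rfl
          · rfl
          · exact (cutMonomial_compl K (⊤ : SimpleGraph (Fin 4)) A).symm) p)
        = monomial (wQ p) (1 : K) := by
    intro p
    induction p using Quotient.inductionOn with
    | h A => exact cutMonomial_eq K A
  calc C c * a.prod (fun p n =>
        (Quotient.lift (cutMonomial K (⊤ : SimpleGraph (Fin 4))) _ p) ^ n)
      = C c * a.prod (fun p n => monomial (n • wQ p) (1 : K)) := by
        refine congrArg (C c * ·) (Finsupp.prod_congr fun p _ => ?_)
        rw [hX p, monomial_pow, one_pow]
    _ = C c * monomial (Wm a) 1 := by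
        rw [Finsupp.prod, prod_monomial_one]; rfl
    _ = monomial (Wm a) c := by rw [C_mul_monomial, mul_one]

end K4b
section K4c

lemma isCutEdge_mk {V : Type} (A : Set V) (u v : V) :
    IsCutEdge A s(u, v) ↔ (u ∈ A ∧ v ∉ A) ∨ (v ∈ A ∧ u ∉ A) := by
  constructor
  · rintro ⟨x, y, hxy, hx, hy⟩
    rw [Sym2.eq_iff] at hxy
    rcases hxy with ⟨rfl, rfl⟩ | ⟨rfl, rfl⟩
    · exact Or.inl ⟨hx, hy⟩
    · exact Or.inr ⟨hx, hy⟩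
  · rintro (⟨hu, hv⟩ | ⟨hv, hu⟩)
    · exact ⟨u, v, rfl, hu, hv⟩
    · exact ⟨v, u, Sym2.eq_swap.symm, hv, hu⟩

lemma wA_apply (A : Set (Fin 4)) (b : Bool) (e : Sym2 (Fin 4)) :
    wA A (b, e) = if e ∈ EF ∧ (IsCutEdge A e ↔ b = true) then 1 else 0 := by
  unfold wA
  rw [Finsupp.finset_sum_apply]
  by_cases he : e ∈ EF
  · rw [Finset.sum_eq_single_of_mem e he (fun e' _ hne => by
      by_cases h : IsCutEdge A e' <;>
        simp [h, Finsupp.single_apply, Prod.ext_iff, hne])]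
    by_cases h : IsCutEdge A e <;> cases b <;>
      simp [h, he, Finsupp.single_apply]
  · rw [Finset.sum_eq_zero (fun e' he' => by
      have hne : e' ≠ e := fun h => he (h ▸ he')
      by_cases h : IsCutEdge A e' <;>
        simp [h, Finsupp.single_apply, Prod.ext_iff, hne, hne.symm])]
    simp [he]

example : wA ({0} : Set (Fin 4)) (true, s(0, 1)) = 1 := by
  rw [wA_apply]
  simp [mem_EF, isCutEdge_mk, Sym2.mk_isDiag_iff]

example : wA ({0, 1} : Set (Fin 4)) (true, s(0, 1)) = 0 := by
  rw [wA_apply]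
  simp [mem_EF, isCutEdge_mk, Sym2.mk_isDiag_iff]

example : wA (∅ : Set (Fin 4)) (false, s(0, 1)) = 1 := by
  rw [wA_apply]
  simp [mem_EF, isCutEdge_mk, Sym2.mk_isDiag_iff]

end K4c
section K4d

lemma Wm_apply (a : σ4 →₀ ℕ) (c : τ4) :
    Wm a c = a P0 * wA (∅ : Set (Fin 4)) c + a P1 * wA ({0} : Set (Fin 4)) c + a P2 * wA ({1} : Set (Fin 4)) c + a P3 * wA ({2} : Set (Fin 4)) c + a P4 * wA ({3} : Set (Fin 4)) c + a P5 * wA ({0, 1} : Set (Fin 4)) c + a P6 * wA ({0, 2} : Set (Fin 4)) c + a P7 * wA ({0, 3} : Set (Fin 4)) c := by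
  have h1 : Wm a c = a.sum fun p n => n * wQ p c := by
    unfold Wm
    rw [Finsupp.sum_apply]
    exact Finsupp.sum_congr fun p _ => by rw [Finsupp.smul_apply, smul_eq_mul]
  rw [h1, Finsupp.sum_of_support_subset a
    (s := ({P0, P1, P2, P3, P4, P5, P6, P7} : Finset σ4))
    (fun p _ => by
      rcases partition_cases p with rfl | rfl | rfl | rfl | rfl | rfl | rfl | rfl <;>
        simp [Finset.mem_insert])
    _ (by simp)]
  simp only [Finset.sum_insert, Finset.mem_insert, Finset.mem_singleton,
    Finset.sum_singleton, neP01, neP02, neP03, neP04, neP05, neP06, neP07, neP10, neP12, neP13, neP14, neP15, neP16, neP17, neP20, neP21, neP23, neP24, neP25, neP26, neP27, neP30, neP31, neP32, neP34, neP35, neP36, neP37, neP40, neP41, neP42, neP43, neP45, neP46, neP47, neP50, neP51, neP52, neP53, neP54, neP56, neP57, neP60, neP61, neP62, neP63, neP64, neP65, neP67, neP70, neP71, neP72, neP73, neP74, neP75, neP76, or_self, not_false_eq_true, or_false, false_or]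
  simp only [wQ_pp]
  ring

def vplus : σ4 →₀ ℕ :=
  Finsupp.single P1 1 + Finsupp.single P2 1 + Finsupp.single P3 1 + Finsupp.single P4 1

def vminus : σ4 →₀ ℕ :=
  Finsupp.single P0 1 + Finsupp.single P5 1 + Finsupp.single P6 1 + Finsupp.single P7 1

@[simp] lemma vplus_P0 : vplus P0 = 0 := by
  simp [vplus, Finsupp.single_apply, neP10, neP20, neP30, neP40]

@[simp] lemma vminus_P0 : vminus P0 = 1 := by
  simp [vminus, Finsupp.single_apply, neP50, neP60, neP70]

@[simp] lemma vplus_P1 : vplus P1 = 1 := by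
  simp [vplus, Finsupp.single_apply, neP21, neP31, neP41]

@[simp] lemma vminus_P1 : vminus P1 = 0 := by
  simp [vminus, Finsupp.single_apply, neP01, neP51, neP61, neP71]

@[simp] lemma vplus_P2 : vplus P2 = 1 := by
  simp [vplus, Finsupp.single_apply, neP12, neP32, neP42]

@[simp] lemma vminus_P2 : vminus P2 = 0 := by
  simp [vminus, Finsupp.single_apply, neP02, neP52, neP62, neP72]

@[simp] lemma vplus_P3 : vplus P3 = 1 := by
  simp [vplus, Finsupp.single_apply, neP13, neP23, neP43]

@[simp] lemma vminus_P3 : vminus P3 = 0 := by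
  simp [vminus, Finsupp.single_apply, neP03, neP53, neP63, neP73]

@[simp] lemma vplus_P4 : vplus P4 = 1 := by
  simp [vplus, Finsupp.single_apply, neP14, neP24, neP34]

@[simp] lemma vminus_P4 : vminus P4 = 0 := by
  simp [vminus, Finsupp.single_apply, neP04, neP54, neP64, neP74]

@[simp] lemma vplus_P5 : vplus P5 = 0 := by
  simp [vplus, Finsupp.single_apply, neP15, neP25, neP35, neP45]

@[simp] lemma vminus_P5 : vminus P5 = 1 := by
  simp [vminus, Finsupp.single_apply, neP05, neP65, neP75]

@[simp] lemma vplus_P6 : vplus P6 = 0 := by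
  simp [vplus, Finsupp.single_apply, neP16, neP26, neP36, neP46]

@[simp] lemma vminus_P6 : vminus P6 = 1 := by
  simp [vminus, Finsupp.single_apply, neP06, neP56, neP76]

@[simp] lemma vplus_P7 : vplus P7 = 0 := by
  simp [vplus, Finsupp.single_apply, neP17, neP27, neP37, neP47]

@[simp] lemma vminus_P7 : vminus P7 = 1 := by
  simp [vminus, Finsupp.single_apply, neP07, neP57, neP67]

end K4d
section K4e

lemma Wm_inj (a b : σ4 →₀ ℕ) (h : Wm a = Wm b) :
    ∃ k : ℕ, a + k • vplus = b + k • vminus ∨ a + k • vminus = b + k • vplus := by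
  have h1 := DFunLike.congr_fun h (true, s((0 : Fin 4), (1 : Fin 4)))
  have h2 := DFunLike.congr_fun h (true, s((0 : Fin 4), (2 : Fin 4)))
  have h3 := DFunLike.congr_fun h (true, s((0 : Fin 4), (3 : Fin 4)))
  have h4 := DFunLike.congr_fun h (true, s((1 : Fin 4), (2 : Fin 4)))
  have h5 := DFunLike.congr_fun h (true, s((1 : Fin 4), (3 : Fin 4)))
  have h6 := DFunLike.congr_fun h (true, s((2 : Fin 4), (3 : Fin 4)))
  have h7 := DFunLike.congr_fun h (false, s((0 : Fin 4), (1 : Fin 4)))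
  simp only [Wm_apply] at h1 h2 h3 h4 h5 h6 h7
  simp [wA_apply, mem_EF, isCutEdge_mk, Sym2.mk_isDiag_iff] at h1 h2 h3 h4 h5 h6 h7
  rcases le_total (a P1) (b P1) with hle | hle
  · refine ⟨b P1 - a P1, Or.inl ?_⟩
    ext p
    rcases partition_cases p with rfl | rfl | rfl | rfl | rfl | rfl | rfl | rfl <;>
      simp only [Finsupp.add_apply, Finsupp.smul_apply, smul_eq_mul,
        vplus_P0, vplus_P1, vplus_P2, vplus_P3, vplus_P4, vplus_P5, vplus_P6, vplus_P7,
        vminus_P0, vminus_P1, vminus_P2, vminus_P3, vminus_P4, vminus_P5, vminus_P6,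
        vminus_P7] <;> omega
  · refine ⟨a P1 - b P1, Or.inr ?_⟩
    ext p
    rcases partition_cases p with rfl | rfl | rfl | rfl | rfl | rfl | rfl | rfl <;>
      simp only [Finsupp.add_apply, Finsupp.smul_apply, smul_eq_mul,
        vplus_P0, vplus_P1, vplus_P2, vplus_P3, vplus_P4, vplus_P5, vplus_P6, vplus_P7,
        vminus_P0, vminus_P1, vminus_P2, vminus_P3, vminus_P4, vminus_P5, vminus_P6,
        vminus_P7] <;> omega

end K4e
section K4f

open MvPolynomial

variable (K : Type) [CommRing K]

/-- The generating binomial. -/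
def gpoly : MvPolynomial σ4 K := monomial vplus 1 - monomial vminus 1

/-- The principal ideal it generates. -/
def Jspan : Ideal (MvPolynomial σ4 K) := Ideal.span {gpoly K}

lemma shift_mem (k : ℕ) (c : σ4 →₀ ℕ) :
    monomial (c + k • vplus) (1 : K) - monomial (c + k • vminus) 1 ∈ Jspan K := by
  induction k with
  | zero => simp
  | succ k ih =>
    have e1 : c + (k + 1) • vplus = (c + k • vplus) + vplus := by
      rw [succ_nsmul, ← add_assoc]
    have e2 : c + (k + 1) • vminus = vminus + (c + k • vminus) := by
      rw [succ_nsmul]; abel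
    have e3 : (c + k • vplus) + vminus = vminus + (c + k • vplus) := add_comm _ _
    have key : monomial (c + (k + 1) • vplus) (1 : K) - monomial (c + (k + 1) • vminus) 1
        = monomial (c + k • vplus) 1 * gpoly K
          + monomial vminus 1 *
            (monomial (c + k • vplus) 1 - monomial (c + k • vminus) 1) := by
      rw [e1, e2]
      simp only [gpoly, mul_sub, monomial_mul, mul_one]
      rw [e3]
      ring
    rw [key]
    exact (Jspan K).add_mem
      (Ideal.mul_mem_left _ _ (Ideal.subset_span (Set.mem_singleton _)))
      ((Jspan K).mul_mem_left _ ih)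

lemma binomial_mem (a b : σ4 →₀ ℕ) (h : Wm a = Wm b) :
    monomial a (1 : K) - monomial b 1 ∈ Jspan K := by
  obtain ⟨k, hk | hk⟩ := Wm_inj a b h
  · -- a + k•vplus = b + k•vminus, so a = c + k•vminus, b = c + k•vplus
    have hc1 : a = (a - k • vminus) + k • vminus := by
      ext p
      have hp := DFunLike.congr_fun hk p
      rcases partition_cases p with rfl | rfl | rfl | rfl | rfl | rfl | rfl | rfl <;>
        simp only [Finsupp.add_apply, Finsupp.tsub_apply, Finsupp.smul_apply, smul_eq_mul,
          vplus_P0, vplus_P1, vplus_P2, vplus_P3, vplus_P4, vplus_P5, vplus_P6, vplus_P7,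
          vminus_P0, vminus_P1, vminus_P2, vminus_P3, vminus_P4, vminus_P5, vminus_P6,
          vminus_P7] at hp ⊢ <;> omega
    have hc2 : b = (a - k • vminus) + k • vplus := by
      ext p
      have hp := DFunLike.congr_fun hk p
      rcases partition_cases p with rfl | rfl | rfl | rfl | rfl | rfl | rfl | rfl <;>
        simp only [Finsupp.add_apply, Finsupp.tsub_apply, Finsupp.smul_apply, smul_eq_mul,
          vplus_P0, vplus_P1, vplus_P2, vplus_P3, vplus_P4, vplus_P5, vplus_P6, vplus_P7,
          vminus_P0, vminus_P1, vminus_P2, vminus_P3, vminus_P4, vminus_P5, vminus_P6,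
          vminus_P7] at hp ⊢ <;> omega
    have hm := (Jspan K).neg_mem (shift_mem K k (a - k • vminus))
    rw [neg_sub] at hm
    rw [hc1, hc2]
    exact hm
  · -- a + k•vminus = b + k•vplus, so a = c + k•vplus, b = c + k•vminus
    have hc1 : a = (a - k • vplus) + k • vplus := by
      ext p
      have hp := DFunLike.congr_fun hk p
      rcases partition_cases p with rfl | rfl | rfl | rfl | rfl | rfl | rfl | rfl <;>
        simp only [Finsupp.add_apply, Finsupp.tsub_apply, Finsupp.smul_apply, smul_eq_mul,
          vplus_P0, vplus_P1, vplus_P2, vplus_P3, vplus_P4, vplus_P5, vplus_P6, vplus_P7,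
          vminus_P0, vminus_P1, vminus_P2, vminus_P3, vminus_P4, vminus_P5, vminus_P6,
          vminus_P7] at hp ⊢ <;> omega
    have hc2 : b = (a - k • vplus) + k • vminus := by
      ext p
      have hp := DFunLike.congr_fun hk p
      rcases partition_cases p with rfl | rfl | rfl | rfl | rfl | rfl | rfl | rfl <;>
        simp only [Finsupp.add_apply, Finsupp.tsub_apply, Finsupp.smul_apply, smul_eq_mul,
          vplus_P0, vplus_P1, vplus_P2, vplus_P3, vplus_P4, vplus_P5, vplus_P6, vplus_P7,
          vminus_P0, vminus_P1, vminus_P2, vminus_P3, vminus_P4, vminus_P5, vminus_P6,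
          vminus_P7] at hp ⊢ <;> omega
    rw [hc1, hc2]
    exact shift_mem K k (a - k • vplus)

end K4f
section K4g

open MvPolynomial

variable (K : Type) [CommRing K]

lemma phi_eq_sum (f : MvPolynomial σ4 K) :
    phi K (⊤ : SimpleGraph (Fin 4)) f
      = ∑ b ∈ f.support, monomial (Wm b) (f.coeff b) := by
  conv_lhs => rw [f.as_sum]
  rw [map_sum]
  exact Finset.sum_congr rfl fun b _ => phi_monomial K b _

lemma ker_le_span : ∀ (n : ℕ) (f : MvPolynomial σ4 K), f.support.card ≤ n →
    phi K (⊤ : SimpleGraph (Fin 4)) f = 0 → f ∈ Jspan K := by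
  intro n
  induction n with
  | zero =>
    intro f hf _
    rw [Nat.le_zero, Finset.card_eq_zero, MvPolynomial.support_eq_empty] at hf
    rw [hf]; exact (Jspan K).zero_mem
  | succ n ih =>
    intro f hcard hker
    by_cases hf0 : f = 0
    · rw [hf0]; exact (Jspan K).zero_mem
    obtain ⟨a, ha⟩ :=
      Finset.nonempty_iff_ne_empty.mpr (fun h => hf0 (MvPolynomial.support_eq_empty.mp h))
    set T := f.support.filter (fun b => Wm b = Wm a) with hT
    have haT : a ∈ T := Finset.mem_filter.mpr ⟨ha, rfl⟩
    have hsum : ∑ b ∈ T, f.coeff b = 0 := by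
      have h0 : MvPolynomial.coeff (Wm a) (phi K (⊤ : SimpleGraph (Fin 4)) f) = 0 := by
        rw [hker]; simp
      rw [phi_eq_sum, MvPolynomial.coeff_sum] at h0
      have h1 : ∀ b ∈ f.support,
          MvPolynomial.coeff (Wm a) (monomial (Wm b) (f.coeff b))
            = if Wm b = Wm a then f.coeff b else 0 := fun b _ =>
        MvPolynomial.coeff_monomial _ _ _
      rw [Finset.sum_congr rfl h1, ← Finset.sum_filter] at h0
      exact h0
    set g' : MvPolynomial σ4 K := ∑ b ∈ T, monomial b (f.coeff b) with hg'
    have hg'J : g' ∈ Jspan K := by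
      have h2 : g' = ∑ b ∈ T, MvPolynomial.C (f.coeff b) * (monomial b 1 - monomial a 1) := by
        rw [hg']
        have h3 : ∀ b ∈ T,
            MvPolynomial.C (f.coeff b) * (monomial b 1 - monomial a 1)
              = monomial b (f.coeff b) - monomial a (f.coeff b) := fun b _ => by
          rw [mul_sub, C_mul_monomial, C_mul_monomial, mul_one]
        rw [Finset.sum_congr rfl h3, Finset.sum_sub_distrib,
          ← map_sum (monomial a) (fun b => f.coeff b) T, hsum]
        simp
      rw [h2]
      exact Ideal.sum_mem _ fun b hb =>
        Ideal.mul_mem_left _ _ (binomial_mem K b a (Finset.mem_filter.mp hb).2)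
    have hcoeff : ∀ c, (f - g').coeff c = if c ∈ T then 0 else f.coeff c := by
      intro c
      rw [MvPolynomial.coeff_sub, hg', MvPolynomial.coeff_sum]
      have h4 : ∀ b ∈ T, MvPolynomial.coeff c (monomial b (f.coeff b))
          = if b = c then f.coeff b else 0 := fun b _ => MvPolynomial.coeff_monomial _ _ _
      rw [Finset.sum_congr rfl h4, Finset.sum_ite_eq' T c (fun b => f.coeff b)]
      by_cases hc : c ∈ T
      · simp [hc]
      · simp [hc]
    have hsub : (f - g').support ⊆ f.support \ T := by
      intro c hc
      rw [MvPolynomial.mem_support_iff, hcoeff] at hc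
      by_cases hcT : c ∈ T
      · rw [if_pos hcT] at hc; exact absurd rfl hc
      · rw [if_neg hcT] at hc
        exact Finset.mem_sdiff.mpr ⟨MvPolynomial.mem_support_iff.mpr hc, hcT⟩
    have hcard' : (f - g').support.card ≤ n := by
      have h5 : (f.support \ T).card = f.support.card - T.card :=
        Finset.card_sdiff_of_subset (Finset.filter_subset _ _)
      have h6 : 1 ≤ T.card := Finset.card_pos.mpr ⟨a, haT⟩
      have h7 := Finset.card_le_card hsub
      omega
    have hker' : phi K (⊤ : SimpleGraph (Fin 4)) (f - g') = 0 := by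
      rw [map_sub, hker, zero_sub, neg_eq_zero, hg', map_sum]
      have h8 : ∀ b ∈ T, phi K (⊤ : SimpleGraph (Fin 4)) (monomial b (f.coeff b))
          = monomial (Wm a) (f.coeff b) := fun b hb => by
        rw [phi_monomial, (Finset.mem_filter.mp hb).2]
      rw [Finset.sum_congr rfl h8, ← map_sum (monomial (Wm a)) (fun b => f.coeff b) T, hsum]
      simp
    have h9 : f = g' + (f - g') := by ring
    rw [h9]
    exact (Jspan K).add_mem hg'J (ih _ hcard' hker')

lemma Wm_vplus_eq_vminus : Wm vplus = Wm vminus := by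
  ext c
  obtain ⟨bb, e⟩ := c
  rw [Wm_apply, Wm_apply]
  simp only [vplus_P0, vplus_P1, vplus_P2, vplus_P3, vplus_P4, vplus_P5, vplus_P6, vplus_P7,
    vminus_P0, vminus_P1, vminus_P2, vminus_P3, vminus_P4, vminus_P5, vminus_P6, vminus_P7]
  by_cases he : e ∈ EF
  · revert he
    induction e using Sym2.ind with
    | _ u v =>
      intro he
      have huv : u ≠ v := by simpa [mem_EF, Sym2.mk_isDiag_iff] using he
      fin_cases u <;> fin_cases v <;>
        first
          | exact absurd rfl huv
          | (cases bb <;> simp [wA_apply, mem_EF, isCutEdge_mk, Sym2.mk_isDiag_iff])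
  · simp [wA_apply, he]

lemma phi_gpoly : phi K (⊤ : SimpleGraph (Fin 4)) (gpoly K) = 0 := by
  rw [gpoly, map_sub, phi_monomial, phi_monomial, Wm_vplus_eq_vminus, sub_self]

lemma gpoly_eq :
    qPart K ({0} : Set (Fin 4)) * qPart K ({1} : Set (Fin 4)) *
        qPart K ({2} : Set (Fin 4)) * qPart K ({3} : Set (Fin 4)) -
      qPart K (∅ : Set (Fin 4)) * qPart K ({0, 1} : Set (Fin 4)) *
        qPart K ({0, 2} : Set (Fin 4)) * qPart K ({0, 3} : Set (Fin 4)) = gpoly K := by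
  have hX : ∀ A : Set (Fin 4), qPart K A = monomial (Finsupp.single (pp A) 1) 1 := fun A => rfl
  rw [gpoly, hX, hX, hX, hX, hX, hX, hX, hX]
  rw [monomial_mul, monomial_mul, monomial_mul, monomial_mul, monomial_mul, monomial_mul]
  norm_num
  rfl

end K4g
theorem stmt12 (K : Type) [Field K] :
    cutIdeal K (⊤ : SimpleGraph (Fin 4)) = Ideal.span
      { qPart K ({0} : Set (Fin 4)) * qPart K ({1} : Set (Fin 4)) *
          qPart K ({2} : Set (Fin 4)) * qPart K ({3} : Set (Fin 4)) -
        qPart K (∅ : Set (Fin 4)) * qPart K ({0, 1} : Set (Fin 4)) *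
          qPart K ({0, 2} : Set (Fin 4)) * qPart K ({0, 3} : Set (Fin 4)) } := by
  rw [gpoly_eq K]
  have hspan : Ideal.span {gpoly K} = Jspan K := rfl
  rw [hspan]
  apply le_antisymm
  · intro f hf
    exact ker_le_span K f.support.card f le_rfl (RingHom.mem_ker.mp hf)
  · rw [← hspan, Ideal.span_le, Set.singleton_subset_iff]
    exact RingHom.mem_ker.mpr (phi_gpoly K)
end CutPaper
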